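/- arXiv:1809.10476 — 2 statements merged into one kernel-verified Lean document; each statement's English description precedes it below -/
import Mathlib

section
/- Explicit values of the Marchenko–Pastur Stieltjes transforms at p(x). Fix y > 0 and let x > y^{1/4}. With p = p(x) = (x²+1)(x²+y)/x² (note p > λ_+ = (1+√y)²), the following identities hold: m_1(p) = −1/(x²+y), m_2(p) = −1/(x²+1), m_1'(p) = x⁴/((x²+y)²(x⁴−y)), m_2'(p) = x⁴/((x²+1)²(x⁴−y)). Furthermore, defining T(t) = t m_1(t) m_2(t), one has T(p) = x^{−2} and T'(p) = (y−x⁴)^{−1}. -/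
/-!
Statement 8: Explicit values of the Marchenko–Pastur Stieltjes transforms at `p(x)`
(Lemma 4.1 of Bao–Ding–Wang).

For real `z > λ₊` the Stieltjes transforms are given by the continuous extension
from the upper half-plane, i.e. `i√((λ₊ − z)(z − λ₋))` becomes the real number
`√((z − λ₊)(z − λ₋))`.
-/

noncomputable section

/-- `λ₊ = (1 + √y)²`. -/
def lamP (y : ℝ) : ℝ := (1 + Real.sqrt y) ^ 2

/-- `λ₋ = (1 − √y)²`. -/
def lamM (y : ℝ) : ℝ := (1 - Real.sqrt y) ^ 2

/-- The Marchenko–Pastur Stieltjes transform `m₁` at real `z > λ₊`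
(continuous extension from the upper half-plane). -/
def m1R (y z : ℝ) : ℝ :=
  (1 - y - z + Real.sqrt ((z - lamP y) * (z - lamM y))) / (2 * z * y)

/-- The Marchenko–Pastur Stieltjes transform `m₂` at real `z > λ₊`
(continuous extension from the upper half-plane). -/
def m2R (y z : ℝ) : ℝ :=
  (y - 1 - z + Real.sqrt ((z - lamP y) * (z - lamM y))) / (2 * z)

/-- `p(x) = (x²+1)(x²+y)/x²`. -/
def pFun (y x : ℝ) : ℝ := (x ^ 2 + 1) * (x ^ 2 + y) / x ^ 2

/-- **Values of the Marchenko–Pastur Stieltjes transforms at `p(x)`.** -/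
theorem mp_stieltjes_values_at_p (y x : ℝ) (hy : 0 < y) (hx : y ^ ((1 : ℝ) / 4) < x) :
    m1R y (pFun y x) = -1 / (x ^ 2 + y) ∧
    m2R y (pFun y x) = -1 / (x ^ 2 + 1) ∧
    deriv (m1R y) (pFun y x) = x ^ 4 / ((x ^ 2 + y) ^ 2 * (x ^ 4 - y)) ∧
    deriv (m2R y) (pFun y x) = x ^ 4 / ((x ^ 2 + 1) ^ 2 * (x ^ 4 - y)) ∧
    (fun t => t * m1R y t * m2R y t) (pFun y x) = x⁻¹ ^ 2 ∧
    deriv (fun t => t * m1R y t * m2R y t) (pFun y x) = (y - x ^ 4)⁻¹ := by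
  have hx0 : 0 < x := lt_of_le_of_lt (Real.rpow_nonneg hy.le _) hx
  have hx4 : y < x ^ 4 := by
    have h1 : (y ^ ((1 : ℝ) / 4)) ^ (4 : ℕ) = y := by
      rw [← Real.rpow_natCast (y ^ ((1 : ℝ) / 4)) 4, ← Real.rpow_mul hy.le]
      norm_num
    calc y = (y ^ ((1 : ℝ) / 4)) ^ (4 : ℕ) := h1.symm
      _ < x ^ (4 : ℕ) := by
          exact pow_lt_pow_left₀ hx (Real.rpow_nonneg hy.le _) (by norm_num)
  obtain ⟨w, hw0, rfl⟩ : ∃ w : ℝ, 0 < w ∧ w ^ 2 = y :=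
    ⟨Real.sqrt y, Real.sqrt_pos.2 hy, Real.sq_sqrt hy.le⟩
  have hsw : Real.sqrt (w ^ 2) = w := Real.sqrt_sq hw0.le
  set P := pFun (w ^ 2) x with hP
  have hx2 : (0 : ℝ) < x ^ 2 := by positivity
  have hx2' : (x : ℝ) ^ 2 ≠ 0 := ne_of_gt hx2
  have hlp : lamP (w ^ 2) = (1 + w) ^ 2 := by rw [lamP, hsw]
  have hlm : lamM (w ^ 2) = (1 - w) ^ 2 := by rw [lamM, hsw]
  have hfq : (P - lamP (w ^ 2)) * (P - lamM (w ^ 2)) = ((x ^ 4 - w ^ 2) / x ^ 2) ^ 2 := by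
    rw [hlp, hlm, hP, pFun]; field_simp; ring
  have hx4w : 0 < x ^ 4 - w ^ 2 := sub_pos.2 hx4
  have hsqv : Real.sqrt ((P - lamP (w ^ 2)) * (P - lamM (w ^ 2))) = (x ^ 4 - w ^ 2) / x ^ 2 := by
    rw [hfq, Real.sqrt_sq (by positivity)]
  have hfne : (P - lamP (w ^ 2)) * (P - lamM (w ^ 2)) ≠ 0 := by
    rw [hfq]; positivity
  have hPpos : 0 < P := by rw [hP, pFun]; positivity
  have hPne : P ≠ 0 := ne_of_gt hPpos
  -- values
  have v1 : m1R (w ^ 2) P = -1 / (x ^ 2 + w ^ 2) := by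
    unfold m1R
    rw [hsqv, hP, pFun]
    have h1 : x ^ 2 + w ^ 2 ≠ 0 := by positivity
    have h2 : x ^ 2 + 1 ≠ 0 := by positivity
    field_simp
    ring
  have v2 : m2R (w ^ 2) P = -1 / (x ^ 2 + 1) := by
    unfold m2R
    rw [hsqv, hP, pFun]
    have h1 : x ^ 2 + w ^ 2 ≠ 0 := by positivity
    have h2 : x ^ 2 + 1 ≠ 0 := by positivity
    field_simp
    ring
  -- derivative of the square-root part
  have hfd : HasDerivAt (fun z => (z - lamP (w ^ 2)) * (z - lamM (w ^ 2)))
      (1 * (P - lamM (w ^ 2)) + (P - lamP (w ^ 2)) * 1) P :=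
    ((hasDerivAt_id P).sub_const (lamP (w ^ 2))).mul
      ((hasDerivAt_id P).sub_const (lamM (w ^ 2)))
  have hsd : HasDerivAt (fun z => Real.sqrt ((z - lamP (w ^ 2)) * (z - lamM (w ^ 2))))
      (1 / (2 * Real.sqrt ((P - lamP (w ^ 2)) * (P - lamM (w ^ 2)))) *
        (1 * (P - lamM (w ^ 2)) + (P - lamP (w ^ 2)) * 1)) P := by
    have h := (Real.hasDerivAt_sqrt hfne).comp P hfd
    exact h
  -- m1 derivative
  have hden1 : HasDerivAt (fun z => 2 * z * w ^ 2) (2 * 1 * w ^ 2) P :=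
    ((hasDerivAt_id P).const_mul 2).mul_const (w ^ 2)
  have hnum1 : HasDerivAt
      (fun z => 1 - w ^ 2 - z + Real.sqrt ((z - lamP (w ^ 2)) * (z - lamM (w ^ 2)))) _ P :=
    ((hasDerivAt_id P).const_sub (1 - w ^ 2)).add hsd
  have hden1ne : 2 * P * w ^ 2 ≠ 0 := by positivity
  have hm1d : HasDerivAt (m1R (w ^ 2)) (x ^ 4 / ((x ^ 2 + w ^ 2) ^ 2 * (x ^ 4 - w ^ 2))) P := by
    have h := hnum1.div hden1 hden1ne
    refine h.congr_deriv (Eq.symm ?_)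
    rw [hsqv, hlp, hlm, hP, pFun]
    have hne1 : x ^ 2 + w ^ 2 ≠ 0 := by positivity
    have hne3 : x ^ 4 - w ^ 2 ≠ 0 := ne_of_gt hx4w
    field_simp
    ring
  -- m2 derivative
  have hden2 : HasDerivAt (fun z => 2 * z) (2 * 1) P := (hasDerivAt_id P).const_mul 2
  have hnum2 : HasDerivAt
      (fun z => w ^ 2 - 1 - z + Real.sqrt ((z - lamP (w ^ 2)) * (z - lamM (w ^ 2)))) _ P :=
    ((hasDerivAt_id P).const_sub (w ^ 2 - 1)).add hsd
  have hden2ne : 2 * P ≠ 0 := by positivity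
  have hm2d : HasDerivAt (m2R (w ^ 2)) (x ^ 4 / ((x ^ 2 + 1) ^ 2 * (x ^ 4 - w ^ 2))) P := by
    have h := hnum2.div hden2 hden2ne
    refine h.congr_deriv (Eq.symm ?_)
    rw [hsqv, hlp, hlm, hP, pFun]
    have hne2 : x ^ 2 + 1 ≠ 0 := by positivity
    have hne3 : x ^ 4 - w ^ 2 ≠ 0 := ne_of_gt hx4w
    field_simp
    ring
  have hne1 : x ^ 2 + w ^ 2 ≠ 0 := by positivity
  have hne2 : x ^ 2 + 1 ≠ 0 := by positivity
  have hne3 : x ^ 4 - w ^ 2 ≠ 0 := ne_of_gt hx4w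
  have hne4 : w ^ 2 - x ^ 4 ≠ 0 := by intro h; exact hne3 (by linarith)
  have e1 := hm1d.deriv
  have e2 := hm2d.deriv
  have hTd : HasDerivAt (fun t => t * m1R (w ^ 2) t * m2R (w ^ 2) t) _ P :=
    ((hasDerivAt_id P).mul hm1d).mul hm2d
  have e3 : deriv (fun t => t * m1R (w ^ 2) t * m2R (w ^ 2) t) P = (w ^ 2 - x ^ 4)⁻¹ := by
    rw [hTd.deriv, Pi.mul_apply, v1, v2, hP, pFun]
    simp only [id_eq]
    field_simp
    ring
  refine ⟨v1, v2, e1, e2, ?_, e3⟩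
  show P * m1R (w ^ 2) P * m2R (w ^ 2) P = x⁻¹ ^ 2
  rw [v1, v2, hP, pFun]
  field_simp

end
end

section
/- Cumulant expansion (generalized Stein lemma). Let ℓ ∈ N be fixed and f ∈ C^{ℓ+1}(R) with bounded derivatives. Let ξ be a centered real random variable with finite first ℓ+2 moments, and let κ_k(ξ) denote the k-th cumulant of ξ. Then there is a constant C_ℓ (depending only on ℓ) such that for every χ > 0: | E(ξ f(ξ)) − Σ_{k=1}^ℓ (κ_{k+1}(ξ)/k!) E f^{(k)}(ξ) | ≤ C_ℓ E(|ξ|^{ℓ+2}) · sup_{|t|≤χ} |f^{(ℓ+1)}(t)| + C_ℓ E(|ξ|^{ℓ+2} 1_{|ξ|>χ}) · sup_{t∈R} |f^{(ℓ+1)}(t)|. -/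
/-!
Statement 13: Cumulant expansion (generalized Stein lemma), Lemma S.1 of Bao–Ding–Wang.

The cumulants `κ_k(ξ)` are characterized through the moment–cumulant recursion
`E ξ^m = Σ_{k=1}^m C(m−1, k−1) κ_k E ξ^{m−k}`.
-/

open MeasureTheory

lemma cheb_pow_indicator {Ω : Type} [MeasureSpace Ω]
    [IsProbabilityMeasure (volume : Measure Ω)]
    (g : Ω → ℝ) (hg : ∀ ω, 0 ≤ g ω) (A : Set Ω) (hA : MeasurableSet A)
    (b c : ℕ)
    (hb : Integrable (A.indicator fun ω => g ω ^ b))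
    (hc : Integrable (A.indicator fun ω => g ω ^ c))
    (hbc : Integrable (A.indicator fun ω => g ω ^ (b + c))) :
    (∫ ω, A.indicator (fun ω' => g ω' ^ b) ω) * (∫ ω, A.indicator (fun ω' => g ω' ^ c) ω)
      ≤ ∫ ω, A.indicator (fun ω' => g ω' ^ (b + c)) ω := by
  set Fb := A.indicator (fun ω => g ω ^ b) with hFb
  set Fc := A.indicator (fun ω => g ω ^ c) with hFc
  set Fbc := A.indicator (fun ω => g ω ^ (b + c)) with hFbc
  set IA := A.indicator (fun _ : Ω => (1:ℝ)) with hIA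
  have hIAint : Integrable IA := (integrable_const (1:ℝ)).indicator hA
  have hFb0 : ∀ ω, 0 ≤ Fb ω := fun ω => Set.indicator_nonneg (fun ω' _ => pow_nonneg (hg ω') b) ω
  have hFc0 : ∀ ω, 0 ≤ Fc ω := fun ω => Set.indicator_nonneg (fun ω' _ => pow_nonneg (hg ω') c) ω
  have hFbc0 : ∀ ω, 0 ≤ Fbc ω :=
    fun ω => Set.indicator_nonneg (fun ω' _ => pow_nonneg (hg ω') _) ω
  have hIA0 : ∀ ω, 0 ≤ IA ω := fun ω => Set.indicator_nonneg (fun _ _ => zero_le_one) ω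
  -- pointwise key inequality
  have key : ∀ ω ω', Fb ω * Fc ω' + Fc ω * Fb ω' ≤ Fbc ω * IA ω' + IA ω * Fbc ω' := by
    intro ω ω'
    by_cases h1 : ω ∈ A
    · by_cases h2 : ω' ∈ A
      · simp only [hFb, hFc, hFbc, hIA, Set.indicator_of_mem h1, Set.indicator_of_mem h2]
        have h3 := hg ω; have h4 := hg ω'
        rw [pow_add, pow_add]
        rcases le_total (g ω) (g ω') with h | h
        · have hb' := pow_le_pow_left₀ h3 h b
          have hc' := pow_le_pow_left₀ h3 h c
          nlinarith [mul_nonneg (sub_nonneg.2 hb') (sub_nonneg.2 hc')]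
        · have hb' := pow_le_pow_left₀ h4 h b
          have hc' := pow_le_pow_left₀ h4 h c
          nlinarith [mul_nonneg (sub_nonneg.2 hb') (sub_nonneg.2 hc')]
      · have e1 : Fc ω' = 0 := Set.indicator_of_notMem h2 _
        have e2 : Fb ω' = 0 := Set.indicator_of_notMem h2 _
        rw [e1, e2, mul_zero, mul_zero, add_zero]
        exact add_nonneg (mul_nonneg (hFbc0 ω) (hIA0 ω')) (mul_nonneg (hIA0 ω) (hFbc0 ω'))
    · have e1 : Fb ω = 0 := Set.indicator_of_notMem h1 _
      have e2 : Fc ω = 0 := Set.indicator_of_notMem h1 _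
      rw [e1, e2, zero_mul, zero_mul, add_zero]
      exact add_nonneg (mul_nonneg (hFbc0 ω) (hIA0 ω')) (mul_nonneg (hIA0 ω) (hFbc0 ω'))
  -- integrate in the first variable
  have step1 : ∀ ω', (∫ ω, Fb ω) * Fc ω' + (∫ ω, Fc ω) * Fb ω'
      ≤ (∫ ω, Fbc ω) * IA ω' + (∫ ω, IA ω) * Fbc ω' := by
    intro ω'
    have hmono : ∫ ω, (Fb ω * Fc ω' + Fc ω * Fb ω') ≤ ∫ ω, (Fbc ω * IA ω' + IA ω * Fbc ω') :=
      integral_mono (by exact (hb.mul_const _).add (hc.mul_const _))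
        (by exact (hbc.mul_const _).add (hIAint.mul_const _)) (fun ω => key ω ω')
    rwa [integral_add (hb.mul_const _) (hc.mul_const _),
      integral_add (hbc.mul_const _) (hIAint.mul_const _),
      integral_mul_const, integral_mul_const, integral_mul_const, integral_mul_const] at hmono
  -- integrate in the second variable
  have step2 : (∫ ω, Fb ω) * (∫ ω, Fc ω) + (∫ ω, Fc ω) * (∫ ω, Fb ω)
      ≤ (∫ ω, Fbc ω) * (∫ ω, IA ω) + (∫ ω, IA ω) * (∫ ω, Fbc ω) := by
    have hmono : ∫ ω', ((∫ ω, Fb ω) * Fc ω' + (∫ ω, Fc ω) * Fb ω')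
        ≤ ∫ ω', ((∫ ω, Fbc ω) * IA ω' + (∫ ω, IA ω) * Fbc ω') :=
      integral_mono (by exact (hc.const_mul _).add (hb.const_mul _))
        (by exact (hIAint.const_mul _).add (hbc.const_mul _)) step1
    rwa [integral_add (hc.const_mul _) (hb.const_mul _),
      integral_add (hIAint.const_mul _) (hbc.const_mul _),
      integral_const_mul, integral_const_mul, integral_const_mul, integral_const_mul] at hmono
  have hIAle : (∫ ω, IA ω) ≤ 1 := by
    have h1 : (∫ ω, IA ω) ≤ ∫ _ω : Ω, (1:ℝ) := by
      refine integral_mono hIAint (integrable_const _) (fun ω => ?_)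
      exact Set.indicator_le_self' (fun _ _ => zero_le_one) ω
    simpa using h1
  have hFbcI0 : 0 ≤ ∫ ω, Fbc ω := integral_nonneg hFbc0
  nlinarith [step2, mul_le_of_le_one_right hFbcI0 hIAle]


lemma nat_aux1 (m : ℕ) (hm : 1 ≤ m) : 2 + 2^m ≤ 5^(2*m-1) := by
  induction m with
  | zero => omega
  | succ n ih =>
    rcases Nat.eq_zero_or_pos n with rfl | hn
    · norm_num
    · have h1 := ih hn
      have h2 : 2*(n+1)-1 = (2*n-1)+2 := by omega
      rw [h2]
      have h4 : (5:ℕ)^(2*n-1+2) = 25 * 5^(2*n-1) := by ring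
      have h3 : (2:ℕ)^(n+1) = 2*2^n := by ring
      rw [h4, h3]
      calc 2 + 2*2^n ≤ 2*(2+2^n) := by omega
        _ ≤ 2*5^(2*n-1) := Nat.mul_le_mul_left 2 h1
        _ ≤ 25*5^(2*n-1) := Nat.mul_le_mul_right _ (by norm_num)

lemma const_bound (m : ℕ) (hm : 1 ≤ m) :
    2 + ∑ k ∈ Finset.Icc 1 (m-1), ((m-1).choose (k-1) : ℝ) * (2 * 5^(k*k)) ≤ 5^(m*m) := by
  obtain ⟨p, rfl⟩ : ∃ p, m = p + 1 := ⟨m-1, by omega⟩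
  simp only [Nat.add_sub_cancel]
  have hsum : ∑ k ∈ Finset.Icc 1 p, (p.choose (k-1) : ℝ) * (2 * 5^(k*k))
      ≤ ∑ k ∈ Finset.Icc 1 p, (p.choose (k-1) : ℝ) * (2 * 5^(p*p)) := by
    apply Finset.sum_le_sum; intro k hk
    have hk' : k ≤ p := (Finset.mem_Icc.1 hk).2
    have h5 : (5:ℝ)^(k*k) ≤ 5^(p*p) :=
      pow_le_pow_right₀ (by norm_num) (Nat.mul_le_mul hk' hk')
    have c0 : (0:ℝ) ≤ (p.choose (k-1) : ℝ) := Nat.cast_nonneg _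
    nlinarith [h5, c0]
  have hchn : ∑ k ∈ Finset.Icc 1 p, (p.choose (k-1)) ≤ 2^p := by
    calc ∑ k ∈ Finset.Icc 1 p, (p.choose (k-1))
        = ∑ i ∈ Finset.range p, (p.choose i) := by
          rw [← Finset.Ico_add_one_right_eq_Icc, Finset.sum_Ico_eq_sum_range]
          simp only [Nat.succ_sub_one, Nat.add_sub_cancel, Nat.add_sub_cancel_left]
      _ ≤ ∑ i ∈ Finset.range (p+1), (p.choose i) :=
          Finset.sum_le_sum_of_subset (Finset.range_subset_range.2 (by omega))
      _ = 2^p := Nat.sum_range_choose _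
  have hch : ∑ k ∈ Finset.Icc 1 p, (p.choose (k-1) : ℝ) ≤ (2:ℝ)^p := by
    calc ∑ k ∈ Finset.Icc 1 p, (p.choose (k-1) : ℝ)
        = ((∑ k ∈ Finset.Icc 1 p, (p.choose (k-1)) : ℕ) : ℝ) := by push_cast; ring
      _ ≤ ((2^p : ℕ) : ℝ) := by exact_mod_cast hchn
      _ = (2:ℝ)^p := by push_cast; ring
  have hfac : ∑ k ∈ Finset.Icc 1 p, (p.choose (k-1) : ℝ) * (2 * 5^(p*p))
      = (∑ k ∈ Finset.Icc 1 p, (p.choose (k-1) : ℝ)) * (2 * 5^(p*p)) :=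
    (Finset.sum_mul _ _ _).symm
  have hpos : (0:ℝ) < 2 * 5^(p*p) := by positivity
  have h2 : ∑ k ∈ Finset.Icc 1 p, (p.choose (k-1) : ℝ) * (2 * 5^(k*k))
      ≤ (2:ℝ)^p * (2 * 5^(p*p)) := by
    refine hsum.trans ?_
    rw [hfac]
    exact mul_le_mul_of_nonneg_right hch hpos.le
  have hnat := nat_aux1 (p+1) (by omega)
  have e1 : 2*(p+1)-1 = 2*p+1 := by omega
  rw [e1] at hnat
  have hcast : (2:ℝ) + 2^(p+1) ≤ 5^(2*p+1) := by exact_mod_cast hnat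
  have hsq : (p+1)*(p+1) = p*p + (2*p+1) := by ring
  have hH : (1:ℝ) ≤ 5^(p*p) := one_le_pow₀ (by norm_num)
  calc 2 + ∑ k ∈ Finset.Icc 1 p, (p.choose (k-1) : ℝ) * (2 * 5^(k*k))
      ≤ 2 + (2:ℝ)^p * (2 * 5^(p*p)) := by linarith
    _ ≤ ((2:ℝ) + 2^(p+1)) * 5^(p*p) := by
        have : (2:ℝ)^(p+1) = 2^p * 2 := by ring
        nlinarith [hH]
    _ ≤ (5:ℝ)^(2*p+1) * 5^(p*p) := by
        nlinarith [pow_nonneg (by norm_num : (0:ℝ) ≤ 5) (p*p), hcast, hH]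
    _ = (5:ℝ)^((p+1)*(p+1)) := by rw [← pow_add, hsq]; ring_nf

lemma assemble_bound (Y X Mc Mi K L' : ℝ) (hY : 0 ≤ Y) (hX : 0 ≤ X) (hMc : 0 ≤ Mc)
    (hMi : 0 ≤ Mi) (hK : 0 ≤ K) (hL : 0 ≤ L') :
    (Mc * Y + Mi * X) + L' * ((K * Y) * Mc + (K * X) * Mi)
      ≤ (1 + (L' + 1) * K) * Y * Mc + (1 + (L' + 1) * K) * X * Mi := by
  nlinarith [mul_nonneg (mul_nonneg hK hY) hMc, mul_nonneg (mul_nonneg hK hX) hMi,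
    mul_nonneg hY hMc, mul_nonneg hX hMi]

lemma iteratedDeriv_sum_monomial (c : ℕ → ℝ) (s : Finset ℕ) (k : ℕ) :
    iteratedDeriv k (fun x : ℝ => ∑ j ∈ s, c j * x ^ j)
      = fun x => ∑ j ∈ s, c j * ((j.descFactorial k : ℝ) * x ^ (j - k)) := by
  induction k with
  | zero => funext x; simp
  | succ k ih =>
    funext x
    rw [iteratedDeriv_succ, ih]
    rw [deriv_fun_sum (A := fun j x => c j * ((j.descFactorial k : ℝ) * x ^ (j - k))) (fun j _ => by
      fun_prop)]
    refine Finset.sum_congr rfl fun j hj => ?_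
    rw [deriv_const_mul_field, deriv_const_mul_field, deriv_pow_field]
    have h1 : j - (k+1) = (j - k) - 1 := by omega
    have h2 : ((j.descFactorial (k+1) : ℕ) : ℝ) = ((j - k : ℕ) : ℝ) * (j.descFactorial k : ℝ) := by
      rw [Nat.descFactorial_succ]; push_cast; ring
    rw [h1, h2]; ring

set_option maxHeartbeats 2000000

/-- **Cumulant expansion.**  For every `ℓ` there is a constant `C_ℓ` such that for every
centered real random variable `ξ` with finite first `ℓ+2` moments, cumulants `κ`, and every
`f ∈ C^{ℓ+1}(ℝ)` with bounded derivatives and every `χ > 0`,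
`| E(ξ f(ξ)) − Σ_{k=1}^ℓ (κ_{k+1}/k!) E f^{(k)}(ξ) |
  ≤ C_ℓ E|ξ|^{ℓ+2} sup_{|t|≤χ} |f^{(ℓ+1)}(t)| + C_ℓ E(|ξ|^{ℓ+2} 1_{|ξ|>χ}) sup_t |f^{(ℓ+1)}(t)|`. -/
theorem cumulant_expansion (ℓ : ℕ) :
    ∃ Cℓ : ℝ, 0 < Cℓ ∧
      ∀ (Ω : Type) (_ : MeasureSpace Ω),
        IsProbabilityMeasure (volume : Measure Ω) →
        ∀ (ξ : Ω → ℝ) (κ : ℕ → ℝ) (f : ℝ → ℝ),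
          Measurable ξ →
          (∀ m : ℕ, m ≤ ℓ + 2 → Integrable (fun ω => |ξ ω| ^ m)) →
          (∫ ω, ξ ω) = 0 →
          -- moment–cumulant recursion characterizing the cumulants of ξ
          (∀ m : ℕ, 1 ≤ m → m ≤ ℓ + 2 →
            (∫ ω, ξ ω ^ m)
              = ∑ k ∈ Finset.Icc 1 m, ((m - 1).choose (k - 1) : ℝ) * κ k * ∫ ω, ξ ω ^ (m - k)) →
          ContDiff ℝ (ℓ + 1) f →
          (∀ k : ℕ, k ≤ ℓ + 1 → ∃ B, ∀ t, |iteratedDeriv k f t| ≤ B) →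
          ∀ χ : ℝ, 0 < χ →
            |(∫ ω, ξ ω * f (ξ ω))
                - ∑ k ∈ Finset.Icc 1 ℓ,
                    κ (k + 1) / (k.factorial : ℝ) * ∫ ω, iteratedDeriv k f (ξ ω)|
              ≤ Cℓ * (∫ ω, |ξ ω| ^ (ℓ + 2))
                    * (⨆ t : Set.Icc (-χ) χ, |iteratedDeriv (ℓ + 1) f (t : ℝ)|)
                + Cℓ * (∫ ω, Set.indicator {ω' | χ < |ξ ω'|} (fun ω' => |ξ ω'| ^ (ℓ + 2)) ω)
                    * (⨆ t : ℝ, |iteratedDeriv (ℓ + 1) f t|) := by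
  classical
  refine ⟨1 + (ℓ+1 : ℝ) * 5^((ℓ+1)*(ℓ+1)), by positivity, ?_⟩
  intro Ω mΩ hprob ξ κ f hmeas hint hcent hrec hf hB χ hχ
  set A : Set Ω := {ω' | χ < |ξ ω'|} with hAdef
  have hA : MeasurableSet A := measurableSet_lt measurable_const hmeas.abs
  have hf' : ContDiff ℝ ((ℓ+1 : ℕ) : WithTop ℕ∞) f := by exact_mod_cast hf
  -- integrability basics
  have hTint : ∀ j, j ≤ ℓ+2 → Integrable (A.indicator fun ω => |ξ ω| ^ j) :=
    fun j hj => (hint j hj).indicator hA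
  have hPowInt : ∀ j, j ≤ ℓ+2 → Integrable (fun ω => ξ ω ^ j) := fun j hj =>
    (hint j hj).mono' ((hmeas.pow_const j).aestronglyMeasurable)
      (Filter.Eventually.of_forall fun ω => by
        rw [Real.norm_eq_abs, abs_pow])
  have hN0 : ∀ j, 0 ≤ ∫ ω, |ξ ω| ^ j :=
    fun j => integral_nonneg fun ω => pow_nonneg (abs_nonneg _) j
  have hT0 : ∀ j, 0 ≤ ∫ ω, A.indicator (fun ω' => |ξ ω'| ^ j) ω := fun j =>
    integral_nonneg fun ω => Set.indicator_nonneg (fun ω' _ => pow_nonneg (abs_nonneg _) j) ω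
  have habs_m : ∀ j, |∫ ω, ξ ω ^ j| ≤ ∫ ω, |ξ ω| ^ j := by
    intro j
    calc |∫ ω, ξ ω ^ j| ≤ ∫ ω, |ξ ω ^ j| := by
          simpa [Real.norm_eq_abs] using norm_integral_le_integral_norm (fun ω => ξ ω ^ j)
      _ = ∫ ω, |ξ ω| ^ j := by simp only [abs_pow]
  have hm0 : (∫ (_ : Ω), (1:ℝ)) = 1 := by simp
  have hm0' : (∫ ω, ξ ω ^ 0) = 1 := by simp
  have hm1 : (∫ ω, ξ ω ^ 1) = 0 := by simpa using hcent
  have hκ1 : κ 1 = 0 := by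
    have h := hrec 1 le_rfl (by omega)
    rw [hm1, Finset.Icc_self, Finset.sum_singleton] at h
    norm_num [hm0'] at h
    linarith [h]
  -- per-degree moment identity
  have hmom : ∀ j, j ≤ ℓ → (∫ ω, ξ ω ^ (j+1))
      = ∑ k ∈ Finset.Icc 1 ℓ, κ (k+1) / (k.factorial : ℝ)
          * ((j.descFactorial k : ℝ) * ∫ ω, ξ ω ^ (j - k)) := by
    intro j hj
    have hstep : (∫ ω, ξ ω ^ (j+1))
        = ∑ i ∈ Finset.range (j+1), (j.choose i : ℝ) * κ (i+1) * ∫ ω, ξ ω ^ (j-i) := by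
      rw [hrec (j+1) (by omega) (by omega), ← Finset.Ico_add_one_right_eq_Icc, Finset.sum_Ico_eq_sum_range]
      refine Finset.sum_congr rfl fun i _ => ?_
      have e2 : 1+i-1 = i := by omega
      have e3 : j+1-(1+i) = j-i := by omega
      have e4 : 1+i = i+1 := by omega
      rw [e2, e3, e4]; simp only [Nat.add_sub_cancel]
    rw [Finset.sum_range_succ'] at hstep
    simp only [hκ1, mul_zero, zero_mul, add_zero, Nat.zero_add] at hstep
    have htar : ∑ k ∈ Finset.Icc 1 ℓ, κ (k+1) / (k.factorial : ℝ)
          * ((j.descFactorial k : ℝ) * ∫ ω, ξ ω ^ (j - k))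
        = ∑ i ∈ Finset.range ℓ, κ (i+1+1) / ((i+1).factorial : ℝ)
          * ((j.descFactorial (i+1) : ℝ) * ∫ ω, ξ ω ^ (j - (i+1))) := by
      rw [← Finset.Ico_add_one_right_eq_Icc, Finset.sum_Ico_eq_sum_range]
      refine Finset.sum_congr rfl fun i _ => ?_
      have e2 : 1+i = i+1 := by omega
      rw [e2]
    rw [htar, hstep]
    refine (Finset.sum_subset (Finset.range_subset_range.2 hj) ?_).trans
      (Finset.sum_congr rfl fun i _ => ?_)
    · intro i _ hi
      have : j < i + 1 := by simp only [Finset.mem_range, not_lt] at hi; omega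
      simp [Nat.choose_eq_zero_of_lt this]
    · rw [Nat.descFactorial_eq_factorial_mul_choose]
      push_cast
      have hfacne : ((i+1).factorial : ℝ) ≠ 0 := Nat.cast_ne_zero.2 (Nat.factorial_ne_zero _)
      field_simp
  -- moment splitting inequalities
  have hNT : ∀ j a, j + a ≤ ℓ+2 →
      (∫ ω, |ξ ω| ^ j) * (∫ ω, A.indicator (fun ω' => |ξ ω'| ^ a) ω)
        ≤ 2 * ∫ ω, A.indicator (fun ω' => |ξ ω'| ^ (j+a)) ω := by
    intro j a hja
    have hcheb := cheb_pow_indicator (fun ω => |ξ ω|) (fun ω => abs_nonneg _) A hA j a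
      (hTint j (by omega)) (hTint a (by omega)) (hTint (j+a) (by omega))
    have h1 : (∫ ω, |ξ ω| ^ j) ≤ χ^j + ∫ ω, A.indicator (fun ω' => |ξ ω'| ^ j) ω := by
      have hsplit : (fun ω => |ξ ω| ^ j)
          = fun ω => A.indicator (fun ω' => |ξ ω'| ^ j) ω + Aᶜ.indicator (fun ω' => |ξ ω'| ^ j) ω := by
        funext ω
        exact (congrFun (Set.indicator_self_add_compl A fun ω' => |ξ ω'| ^ j) ω).symm
      have hco : (∫ ω, Aᶜ.indicator (fun ω' => |ξ ω'| ^ j) ω) ≤ χ ^ j := by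
        have := integral_mono ((hint j (by omega)).indicator hA.compl)
          (integrable_const (χ^j)) (fun ω => ?_)
        · calc (∫ ω, Aᶜ.indicator (fun ω' => |ξ ω'| ^ j) ω) ≤ ∫ (_ : Ω), χ^j := this
            _ = χ ^ j := by simp
        · by_cases hω : ω ∈ Aᶜ
          · rw [Set.indicator_of_mem hω]
            have : |ξ ω| ≤ χ := le_of_not_gt hω
            exact pow_le_pow_left₀ (abs_nonneg _) this j
          · rw [Set.indicator_of_notMem hω]
            exact pow_nonneg hχ.le j
      calc (∫ ω, |ξ ω| ^ j)
          = (∫ ω, (A.indicator (fun ω' => |ξ ω'| ^ j) ω + Aᶜ.indicator (fun ω' => |ξ ω'| ^ j) ω)) := by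
            rw [← hsplit]
        _ = (∫ ω, A.indicator (fun ω' => |ξ ω'| ^ j) ω) + ∫ ω, Aᶜ.indicator (fun ω' => |ξ ω'| ^ j) ω := by
            rw [integral_add (hTint j (by omega)) ((hint j (by omega)).indicator hA.compl)]
        _ ≤ χ^j + ∫ ω, A.indicator (fun ω' => |ξ ω'| ^ j) ω := by linarith
    have h2 : χ^j * (∫ ω, A.indicator (fun ω' => |ξ ω'| ^ a) ω)
        ≤ ∫ ω, A.indicator (fun ω' => |ξ ω'| ^ (j+a)) ω := by
      have hmono : (∫ ω, χ^j * A.indicator (fun ω' => |ξ ω'| ^ a) ω)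
          ≤ ∫ ω, A.indicator (fun ω' => |ξ ω'| ^ (j+a)) ω := by
        refine integral_mono ((hTint a (by omega)).const_mul _) (hTint (j+a) (by omega)) (fun ω => ?_)
        by_cases hω : ω ∈ A
        · rw [Set.indicator_of_mem hω, Set.indicator_of_mem hω, pow_add]
          have hχξ : χ ≤ |ξ ω| := le_of_lt hω
          exact mul_le_mul_of_nonneg_right (pow_le_pow_left₀ hχ.le hχξ j)
            (pow_nonneg (abs_nonneg _) a)
        · rw [Set.indicator_of_notMem hω, Set.indicator_of_notMem hω, mul_zero]
      rwa [integral_const_mul] at hmono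
    have h3 := mul_le_mul_of_nonneg_right h1 (hT0 a)
    calc (∫ ω, |ξ ω| ^ j) * (∫ ω, A.indicator (fun ω' => |ξ ω'| ^ a) ω)
        ≤ (χ^j + ∫ ω, A.indicator (fun ω' => |ξ ω'| ^ j) ω)
            * (∫ ω, A.indicator (fun ω' => |ξ ω'| ^ a) ω) := h3
      _ = χ^j * (∫ ω, A.indicator (fun ω' => |ξ ω'| ^ a) ω)
            + (∫ ω, A.indicator (fun ω' => |ξ ω'| ^ j) ω)
              * (∫ ω, A.indicator (fun ω' => |ξ ω'| ^ a) ω) := by ring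
      _ ≤ 2 * ∫ ω, A.indicator (fun ω' => |ξ ω'| ^ (j+a)) ω := by linarith [hcheb]
  have hNN : ∀ j a, j + a ≤ ℓ+2 →
      (∫ ω, |ξ ω| ^ j) * (∫ ω, |ξ ω| ^ a) ≤ 2 * ∫ ω, |ξ ω| ^ (j+a) := by
    intro j a hja
    have hcheb := cheb_pow_indicator (fun ω => |ξ ω|) (fun ω => abs_nonneg _) Set.univ
      MeasurableSet.univ j a
      (by simpa [Set.indicator_univ] using hint j (by omega))
      (by simpa [Set.indicator_univ] using hint a (by omega))
      (by simpa [Set.indicator_univ] using hint (j+a) (by omega))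
    simp only [Set.indicator_univ] at hcheb
    have := hN0 (j+a)
    linarith [hcheb]
  -- cumulant bounds
  have hκbd : ∀ m, 1 ≤ m → ∀ a, m + a = ℓ+2 →
      |κ m| * (∫ ω, A.indicator (fun ω' => |ξ ω'| ^ a) ω)
          ≤ 5^(m*m) * (∫ ω, A.indicator (fun ω' => |ξ ω'| ^ (ℓ+2)) ω)
        ∧ |κ m| * (∫ ω, |ξ ω| ^ a) ≤ 5^(m*m) * (∫ ω, |ξ ω| ^ (ℓ+2)) := by
    intro m
    induction m using Nat.strong_induction_on with
    | _ m ih =>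
      intro hm a ha
      have hrec' := hrec m hm (by omega)
      have hIccm : Finset.Icc 1 m = insert m (Finset.Icc 1 (m-1)) := by
        ext k; simp only [Finset.mem_Icc, Finset.mem_insert]; omega
      rw [hIccm, Finset.sum_insert (by simp only [Finset.mem_Icc]; omega)] at hrec'
      rw [Nat.sub_self, hm0', Nat.choose_self] at hrec'
      have hκm : κ m = (∫ ω, ξ ω ^ m)
          - ∑ k ∈ Finset.Icc 1 (m-1), ((m - 1).choose (k - 1) : ℝ) * κ k * ∫ ω, ξ ω ^ (m-k) := by
        rw [hrec']; push_cast; ring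
      have habsκ : |κ m| ≤ (∫ ω, |ξ ω| ^ m)
          + ∑ k ∈ Finset.Icc 1 (m-1), ((m - 1).choose (k - 1) : ℝ) * |κ k| * ∫ ω, |ξ ω| ^ (m-k) := by
        rw [hκm]
        refine le_trans (abs_sub _ _) (add_le_add (habs_m m) ?_)
        refine le_trans (Finset.abs_sum_le_sum_abs _ _) (Finset.sum_le_sum fun k hk => ?_)
        rw [abs_mul, abs_mul, abs_of_nonneg (by positivity : (0:ℝ) ≤ ((m - 1).choose (k - 1) : ℝ))]
        exact mul_le_mul_of_nonneg_left (habs_m _)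
          (by positivity)
      constructor
      · -- tail version
        have hTa := hT0 a
        have hstep := mul_le_mul_of_nonneg_right habsκ hTa
        refine le_trans hstep ?_
        rw [add_mul, Finset.sum_mul]
        have hterm : ∀ k ∈ Finset.Icc 1 (m-1),
            ((m - 1).choose (k - 1) : ℝ) * |κ k| * (∫ ω, |ξ ω| ^ (m-k))
                * (∫ ω, A.indicator (fun ω' => |ξ ω'| ^ a) ω)
              ≤ ((m - 1).choose (k - 1) : ℝ) * (2 * 5^(k*k))
                * (∫ ω, A.indicator (fun ω' => |ξ ω'| ^ (ℓ+2)) ω) := by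
          intro k hk
          obtain ⟨hk1, hk2⟩ := Finset.mem_Icc.1 hk
          have hkm : k < m := by omega
          have h1 : (∫ ω, |ξ ω| ^ (m-k)) * (∫ ω, A.indicator (fun ω' => |ξ ω'| ^ a) ω)
              ≤ 2 * ∫ ω, A.indicator (fun ω' => |ξ ω'| ^ ((m-k)+a)) ω := hNT (m-k) a (by omega)
          have h2 := (ih k hkm hk1 ((m-k)+a) (by omega)).1
          have hκk0 : (0:ℝ) ≤ |κ k| := abs_nonneg _
          calc ((m - 1).choose (k - 1) : ℝ) * |κ k| * (∫ ω, |ξ ω| ^ (m-k))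
                * (∫ ω, A.indicator (fun ω' => |ξ ω'| ^ a) ω)
              = ((m - 1).choose (k - 1) : ℝ)
                * (|κ k| * ((∫ ω, |ξ ω| ^ (m-k)) * (∫ ω, A.indicator (fun ω' => |ξ ω'| ^ a) ω))) := by
                ring
            _ ≤ ((m - 1).choose (k - 1) : ℝ)
                * (|κ k| * (2 * ∫ ω, A.indicator (fun ω' => |ξ ω'| ^ ((m-k)+a)) ω)) := by
                refine mul_le_mul_of_nonneg_left (mul_le_mul_of_nonneg_left h1 hκk0) (by positivity)
            _ = ((m - 1).choose (k - 1) : ℝ)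
                * (2 * (|κ k| * ∫ ω, A.indicator (fun ω' => |ξ ω'| ^ ((m-k)+a)) ω)) := by ring
            _ ≤ ((m - 1).choose (k - 1) : ℝ)
                * (2 * (5^(k*k) * ∫ ω, A.indicator (fun ω' => |ξ ω'| ^ (ℓ+2)) ω)) := by
                refine mul_le_mul_of_nonneg_left (mul_le_mul_of_nonneg_left h2 (by norm_num)) (by positivity)
            _ = ((m - 1).choose (k - 1) : ℝ) * (2 * 5^(k*k))
                * (∫ ω, A.indicator (fun ω' => |ξ ω'| ^ (ℓ+2)) ω) := by ring
        have hNTm : (∫ ω, |ξ ω| ^ m) * (∫ ω, A.indicator (fun ω' => |ξ ω'| ^ a) ω)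
            ≤ 2 * ∫ ω, A.indicator (fun ω' => |ξ ω'| ^ (ℓ+2)) ω := by
          have h := hNT m a (by omega); rwa [ha] at h
        refine le_trans (add_le_add hNTm (Finset.sum_le_sum hterm)) ?_
        rw [← Finset.sum_mul]
        have hcb := const_bound m hm
        have hX0 := hT0 (ℓ+2)
        nlinarith [mul_le_mul_of_nonneg_right hcb hX0]
      · -- plain version
        have hNa := hN0 a
        have hstep := mul_le_mul_of_nonneg_right habsκ hNa
        refine le_trans hstep ?_
        rw [add_mul, Finset.sum_mul]
        have hterm : ∀ k ∈ Finset.Icc 1 (m-1),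
            ((m - 1).choose (k - 1) : ℝ) * |κ k| * (∫ ω, |ξ ω| ^ (m-k))
                * (∫ ω, |ξ ω| ^ a)
              ≤ ((m - 1).choose (k - 1) : ℝ) * (2 * 5^(k*k)) * (∫ ω, |ξ ω| ^ (ℓ+2)) := by
          intro k hk
          obtain ⟨hk1, hk2⟩ := Finset.mem_Icc.1 hk
          have hkm : k < m := by omega
          have h1 : (∫ ω, |ξ ω| ^ (m-k)) * (∫ ω, |ξ ω| ^ a)
              ≤ 2 * ∫ ω, |ξ ω| ^ ((m-k)+a) := hNN (m-k) a (by omega)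
          have h2 := (ih k hkm hk1 ((m-k)+a) (by omega)).2
          have hκk0 : (0:ℝ) ≤ |κ k| := abs_nonneg _
          calc ((m - 1).choose (k - 1) : ℝ) * |κ k| * (∫ ω, |ξ ω| ^ (m-k)) * (∫ ω, |ξ ω| ^ a)
              = ((m - 1).choose (k - 1) : ℝ)
                * (|κ k| * ((∫ ω, |ξ ω| ^ (m-k)) * (∫ ω, |ξ ω| ^ a))) := by ring
            _ ≤ ((m - 1).choose (k - 1) : ℝ)
                * (|κ k| * (2 * ∫ ω, |ξ ω| ^ ((m-k)+a))) := by
                refine mul_le_mul_of_nonneg_left (mul_le_mul_of_nonneg_left h1 hκk0) (by positivity)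
            _ = ((m - 1).choose (k - 1) : ℝ) * (2 * (|κ k| * ∫ ω, |ξ ω| ^ ((m-k)+a))) := by ring
            _ ≤ ((m - 1).choose (k - 1) : ℝ)
                * (2 * (5^(k*k) * ∫ ω, |ξ ω| ^ (ℓ+2))) := by
                refine mul_le_mul_of_nonneg_left (mul_le_mul_of_nonneg_left h2 (by norm_num)) (by positivity)
            _ = ((m - 1).choose (k - 1) : ℝ) * (2 * 5^(k*k)) * (∫ ω, |ξ ω| ^ (ℓ+2)) := by ring
        have hNNm : (∫ ω, |ξ ω| ^ m) * (∫ ω, |ξ ω| ^ a) ≤ 2 * ∫ ω, |ξ ω| ^ (ℓ+2) := by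
          have h := hNN m a (by omega); rwa [ha] at h
        refine le_trans (add_le_add hNNm (Finset.sum_le_sum hterm)) ?_
        rw [← Finset.sum_mul]
        have hcb := const_bound m hm
        have hY0 := hN0 (ℓ+2)
        nlinarith [mul_le_mul_of_nonneg_right hcb hY0]
  -- Taylor polynomial and remainder
  set cP : ℕ → ℝ := fun j => iteratedDeriv j f 0 / (j.factorial : ℝ) with hcPdef
  set P : ℝ → ℝ := fun x => ∑ j ∈ Finset.range (ℓ+1), cP j * x ^ j with hPdef
  have hPk' : ∀ k x, iteratedDeriv k P x
      = ∑ j ∈ Finset.range (ℓ+1), cP j * ((j.descFactorial k : ℝ) * x ^ (j - k)) := by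
    intro k x
    rw [hPdef, iteratedDeriv_sum_monomial]
  have hPcd : ContDiff ℝ ((ℓ+1 : ℕ) : WithTop ℕ∞) P := by
    rw [hPdef]
    exact ContDiff.sum fun j _ => contDiff_const.mul (contDiff_id.pow j)
  set g : ℝ → ℝ := fun x => f x - P x with hgdef
  have hgcd : ContDiff ℝ ((ℓ+1 : ℕ) : WithTop ℕ∞) g := hf'.sub hPcd
  have hgk : ∀ k, k ≤ ℓ+1 → ∀ x, iteratedDeriv k g x = iteratedDeriv k f x - iteratedDeriv k P x := by
    intro k hk x
    have h1 : g = f - P := rfl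
    have hcast : ((k : ℕ) : WithTop ℕ∞) ≤ ((ℓ+1 : ℕ) : WithTop ℕ∞) := by exact_mod_cast hk
    rw [h1, ← iteratedDerivWithin_univ, ← iteratedDerivWithin_univ, ← iteratedDerivWithin_univ,
      iteratedDerivWithin_sub (Set.mem_univ x) uniqueDiffOn_univ
        (hf'.of_le hcast).contDiffWithinAt (hPcd.of_le hcast).contDiffWithinAt]
  have hg0 : ∀ k, k ≤ ℓ → iteratedDeriv k g 0 = 0 := by
    intro k hk
    rw [hgk k (by omega) 0, hPk' k 0]
    have hsum : ∑ j ∈ Finset.range (ℓ+1), cP j * ((j.descFactorial k : ℝ) * (0:ℝ) ^ (j - k))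
        = iteratedDeriv k f 0 := by
      rw [Finset.sum_eq_single k]
      · rw [hcPdef]
        simp only [Nat.descFactorial_self, Nat.sub_self, pow_zero, mul_one]
        field_simp
      · intro j _ hne
        rcases lt_or_gt_of_ne hne with hlt | hgt
        · simp [Nat.descFactorial_eq_zero_iff_lt.2 hlt]
        · simp [zero_pow (by omega : j - k ≠ 0)]
      · intro hk'
        exact absurd (Finset.mem_range.2 (by omega)) hk'
    rw [hsum, sub_self]
  have hgtop : ∀ x, iteratedDeriv (ℓ+1) g x = iteratedDeriv (ℓ+1) f x := by
    intro x
    rw [hgk (ℓ+1) le_rfl x, hPk' (ℓ+1) x]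
    have hz : ∑ j ∈ Finset.range (ℓ+1), cP j * ((j.descFactorial (ℓ+1) : ℝ) * x ^ (j - (ℓ+1))) = 0 :=
      Finset.sum_eq_zero fun j hj => by
        rw [Nat.descFactorial_eq_zero_iff_lt.2 (Finset.mem_range.1 hj)]
        simp
    rw [hz, sub_zero]
  -- sups
  obtain ⟨B, hBtop⟩ := hB (ℓ+1) le_rfl
  have hbddχ : BddAbove (Set.range fun t : Set.Icc (-χ) χ => |iteratedDeriv (ℓ+1) f (t:ℝ)|) :=
    ⟨B, by rintro _ ⟨u, rfl⟩; exact hBtop u⟩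
  have hbddinf : BddAbove (Set.range fun t : ℝ => |iteratedDeriv (ℓ+1) f t|) :=
    ⟨B, by rintro _ ⟨u, rfl⟩; exact hBtop u⟩
  set Mχ := ⨆ t : Set.Icc (-χ) χ, |iteratedDeriv (ℓ+1) f (t:ℝ)| with hMχdef
  set Minf := ⨆ t : ℝ, |iteratedDeriv (ℓ+1) f t| with hMinfdef
  have hMχle : ∀ t : ℝ, |t| ≤ χ → |iteratedDeriv (ℓ+1) f t| ≤ Mχ := by
    intro t ht
    obtain ⟨h1, h2⟩ := abs_le.1 ht
    exact le_ciSup hbddχ (⟨t, h1, h2⟩ : Set.Icc (-χ) χ)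
  have hMinfle : ∀ t : ℝ, |iteratedDeriv (ℓ+1) f t| ≤ Minf := fun t => le_ciSup hbddinf t
  have hMχ0 : 0 ≤ Mχ := le_trans (abs_nonneg _) (hMχle 0 (by rw [abs_zero]; exact hχ.le))
  have hMinf0 : 0 ≤ Minf := le_trans (abs_nonneg _) (hMinfle 0)
  -- pointwise derivative bounds for the remainder g
  have hbd : ∀ i, i ≤ ℓ+1 → ∀ x : ℝ,
      |iteratedDeriv (ℓ+1-i) g x| ≤ (Mχ + Minf * (if χ < |x| then 1 else 0)) * |x| ^ i := by
    intro i
    induction i with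
    | zero =>
      intro _ x
      simp only [Nat.sub_zero, pow_zero, mul_one]
      rw [hgtop x]
      by_cases hx : χ < |x|
      · rw [if_pos hx]
        have := hMinfle x
        nlinarith [hMχ0]
      · rw [if_neg hx]
        have := hMχle x (le_of_not_gt hx)
        nlinarith [hMinf0]
    | succ i ih =>
      intro hi x
      have ihx := ih (by omega)
      have e1 : ℓ+1-i = (ℓ+1-(i+1))+1 := by omega
      rw [e1] at ihx
      have hk1 : ℓ+1-(i+1) ≤ ℓ := by omega
      have hdiff : ∀ y ∈ Set.uIcc (0:ℝ) x, DifferentiableAt ℝ (iteratedDeriv (ℓ+1-(i+1)) g) y := by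
        intro y _
        have hlt : ((ℓ+1-(i+1) : ℕ) : WithTop ℕ∞) < ((ℓ+1 : ℕ) : WithTop ℕ∞) := by
          exact_mod_cast (by omega : ℓ+1-(i+1) < ℓ+1)
        exact (hgcd.differentiable_iteratedDeriv _ hlt) y
      have hcont : ContinuousOn (iteratedDeriv ((ℓ+1-(i+1))+1) g) (Set.uIcc (0:ℝ) x) := by
        have hle : (((ℓ+1-(i+1))+1 : ℕ) : WithTop ℕ∞) ≤ ((ℓ+1 : ℕ) : WithTop ℕ∞) := by
          exact_mod_cast (by omega : (ℓ+1-(i+1))+1 ≤ ℓ+1)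
        exact (hgcd.continuous_iteratedDeriv _ hle).continuousOn
      have hftc : iteratedDeriv (ℓ+1-(i+1)) g x
          = ∫ t in (0:ℝ)..x, iteratedDeriv ((ℓ+1-(i+1))+1) g t := by
        rw [intervalIntegral.integral_deriv_eq_sub' (iteratedDeriv (ℓ+1-(i+1)) g)
          (iteratedDeriv_succ).symm hdiff hcont, hg0 _ hk1, sub_zero]
      have hC : ∀ t ∈ Set.uIoc (0:ℝ) x, ‖iteratedDeriv ((ℓ+1-(i+1))+1) g t‖
          ≤ (Mχ + Minf * (if χ < |x| then 1 else 0)) * |x| ^ i := by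
        intro t ht
        have habs : |t| ≤ |x| := by
          rcases Set.mem_uIoc.1 ht with ⟨h1, h2⟩ | ⟨h1, h2⟩
          · rw [abs_of_pos h1]; exact le_trans h2 (le_abs_self x)
          · rw [abs_of_nonpos h2]
            calc -t ≤ -x := by linarith
              _ ≤ |x| := neg_le_abs x
        have hind : (if χ < |t| then (1:ℝ) else 0) ≤ (if χ < |x| then (1:ℝ) else 0) := by
          by_cases h : χ < |t|
          · rw [if_pos h, if_pos (lt_of_lt_of_le h habs)]
          · rw [if_neg h]
            split <;> norm_num
        have h1 := ihx t
        rw [Real.norm_eq_abs]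
        refine le_trans h1 ?_
        have hc0 : 0 ≤ Mχ + Minf * (if χ < |x| then (1:ℝ) else 0) := by
          have : (0:ℝ) ≤ (if χ < |x| then (1:ℝ) else 0) := by split <;> norm_num
          nlinarith
        refine mul_le_mul (by nlinarith [mul_le_mul_of_nonneg_left hind hMinf0])
          (pow_le_pow_left₀ (abs_nonneg t) habs i) (pow_nonneg (abs_nonneg t) i) hc0
      have hnorm := intervalIntegral.norm_integral_le_of_norm_le_const hC
      rw [sub_zero] at hnorm
      calc |iteratedDeriv (ℓ+1-(i+1)) g x|
          = ‖∫ t in (0:ℝ)..x, iteratedDeriv ((ℓ+1-(i+1))+1) g t‖ := by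
            rw [hftc, Real.norm_eq_abs]
        _ ≤ (Mχ + Minf * (if χ < |x| then 1 else 0)) * |x| ^ i * |x| := hnorm
        _ = (Mχ + Minf * (if χ < |x| then 1 else 0)) * |x| ^ (i+1) := by
            rw [pow_succ]; ring
  -- pointwise bounds composed with ξ
  have hgpt : ∀ ω, |ξ ω * g (ξ ω)|
      ≤ Mχ * |ξ ω| ^ (ℓ+2) + Minf * A.indicator (fun ω' => |ξ ω'| ^ (ℓ+2)) ω := by
    intro ω
    have h0 := hbd (ℓ+1) le_rfl (ξ ω)
    rw [show ℓ+1-(ℓ+1) = 0 from by omega, iteratedDeriv_zero] at h0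
    by_cases hω : χ < |ξ ω|
    · rw [if_pos hω] at h0
      rw [Set.indicator_of_mem (by exact hω : ω ∈ A)]
      calc |ξ ω * g (ξ ω)| = |ξ ω| * |g (ξ ω)| := abs_mul _ _
        _ ≤ |ξ ω| * ((Mχ + Minf * 1) * |ξ ω| ^ (ℓ+1)) :=
            mul_le_mul_of_nonneg_left h0 (abs_nonneg _)
        _ = Mχ * |ξ ω| ^ (ℓ+2) + Minf * |ξ ω| ^ (ℓ+2) := by ring
    · rw [if_neg hω] at h0
      rw [Set.indicator_of_notMem (by exact hω : ω ∉ A), mul_zero, add_zero]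
      calc |ξ ω * g (ξ ω)| = |ξ ω| * |g (ξ ω)| := abs_mul _ _
        _ ≤ |ξ ω| * ((Mχ + Minf * 0) * |ξ ω| ^ (ℓ+1)) :=
            mul_le_mul_of_nonneg_left h0 (abs_nonneg _)
        _ = Mχ * |ξ ω| ^ (ℓ+2) := by ring
  have hgkpt : ∀ k, 1 ≤ k → k ≤ ℓ → ∀ ω, |iteratedDeriv k g (ξ ω)|
      ≤ Mχ * |ξ ω| ^ (ℓ+1-k) + Minf * A.indicator (fun ω' => |ξ ω'| ^ (ℓ+1-k)) ω := by
    intro k hk1 hk2 ω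
    have h0 := hbd (ℓ+1-k) (by omega) (ξ ω)
    rw [show ℓ+1-(ℓ+1-k) = k from by omega] at h0
    by_cases hω : χ < |ξ ω|
    · rw [if_pos hω] at h0
      rw [Set.indicator_of_mem (by exact hω : ω ∈ A)]
      calc |iteratedDeriv k g (ξ ω)| ≤ (Mχ + Minf * 1) * |ξ ω| ^ (ℓ+1-k) := h0
        _ = Mχ * |ξ ω| ^ (ℓ+1-k) + Minf * |ξ ω| ^ (ℓ+1-k) := by ring
    · rw [if_neg hω] at h0
      rw [Set.indicator_of_notMem (by exact hω : ω ∉ A), mul_zero, add_zero]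
      calc |iteratedDeriv k g (ξ ω)| ≤ (Mχ + Minf * 0) * |ξ ω| ^ (ℓ+1-k) := h0
        _ = Mχ * |ξ ω| ^ (ℓ+1-k) := by ring
  -- generic integral bound
  have key_int : ∀ (h : Ω → ℝ) (j : ℕ), j ≤ ℓ+2 → AEStronglyMeasurable h volume →
      (∀ ω, |h ω| ≤ Mχ * |ξ ω| ^ j + Minf * A.indicator (fun ω' => |ξ ω'| ^ j) ω) →
      Integrable h ∧ |∫ ω, h ω|
        ≤ Mχ * (∫ ω, |ξ ω| ^ j) + Minf * (∫ ω, A.indicator (fun ω' => |ξ ω'| ^ j) ω) := by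
    intro h j hj hameas hbd'
    have hbint : Integrable (fun ω => Mχ * |ξ ω| ^ j + Minf * A.indicator (fun ω' => |ξ ω'| ^ j) ω) :=
      ((hint j hj).const_mul Mχ).add ((hTint j hj).const_mul Minf)
    have hhint : Integrable h := hbint.mono' hameas
      (Filter.Eventually.of_forall fun ω => by rw [Real.norm_eq_abs]; exact hbd' ω)
    refine ⟨hhint, ?_⟩
    calc |∫ ω, h ω| ≤ ∫ ω, |h ω| := by
          simpa [Real.norm_eq_abs] using norm_integral_le_integral_norm h
      _ ≤ ∫ ω, (Mχ * |ξ ω| ^ j + Minf * A.indicator (fun ω' => |ξ ω'| ^ j) ω) :=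
          integral_mono hhint.abs hbint hbd'
      _ = Mχ * (∫ ω, |ξ ω| ^ j) + Minf * (∫ ω, A.indicator (fun ω' => |ξ ω'| ^ j) ω) := by
          rw [integral_add ((hint j hj).const_mul Mχ) ((hTint j hj).const_mul Minf),
            integral_const_mul, integral_const_mul]
  -- measurability of compositions
  have hgmeas : AEStronglyMeasurable (fun ω => ξ ω * g (ξ ω)) volume :=
    (hmeas.mul ((hgcd.continuous.measurable).comp hmeas)).aestronglyMeasurable
  have hgkmeas : ∀ k, k ≤ ℓ+1 → AEStronglyMeasurable (fun ω => iteratedDeriv k g (ξ ω)) volume := by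
    intro k hk
    have hle : ((k : ℕ) : WithTop ℕ∞) ≤ ((ℓ+1 : ℕ) : WithTop ℕ∞) := by exact_mod_cast hk
    exact (((hgcd.continuous_iteratedDeriv _ hle).measurable).comp hmeas).aestronglyMeasurable
  have hgI := key_int (fun ω => ξ ω * g (ξ ω)) (ℓ+2) le_rfl hgmeas hgpt
  have hgkI : ∀ k, 1 ≤ k → k ≤ ℓ →
      Integrable (fun ω => iteratedDeriv k g (ξ ω)) ∧ |∫ ω, iteratedDeriv k g (ξ ω)|
        ≤ Mχ * (∫ ω, |ξ ω| ^ (ℓ+1-k)) + Minf * (∫ ω, A.indicator (fun ω' => |ξ ω'| ^ (ℓ+1-k)) ω) :=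
    fun k hk1 hk2 => key_int (fun ω => iteratedDeriv k g (ξ ω)) (ℓ+1-k) (by omega)
      (hgkmeas k (by omega)) (hgkpt k hk1 hk2)
  -- polynomial integrals
  have hPxi : (fun ω => ξ ω * P (ξ ω)) = fun ω => ∑ j ∈ Finset.range (ℓ+1), cP j * ξ ω ^ (j+1) := by
    funext ω
    rw [hPdef, Finset.mul_sum]
    exact Finset.sum_congr rfl fun j _ => by ring
  have hPxiInt : Integrable (fun ω => ξ ω * P (ξ ω)) := by
    rw [hPxi]
    exact integrable_finset_sum _ fun j hj =>
      (hPowInt (j+1) (by have := Finset.mem_range.1 hj; omega)).const_mul _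
  have hPxiVal : (∫ ω, ξ ω * P (ξ ω)) = ∑ j ∈ Finset.range (ℓ+1), cP j * ∫ ω, ξ ω ^ (j+1) := by
    rw [hPxi, integral_finset_sum _ (fun j hj =>
      (hPowInt (j+1) (by have := Finset.mem_range.1 hj; omega)).const_mul _)]
    exact Finset.sum_congr rfl fun j _ => integral_const_mul _ _
  have hPkfun : ∀ k, (fun ω => iteratedDeriv k P (ξ ω))
      = fun ω => ∑ j ∈ Finset.range (ℓ+1), (cP j * (j.descFactorial k : ℝ)) * ξ ω ^ (j-k) := by
    intro k
    funext ω
    rw [hPk' k (ξ ω)]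
    exact Finset.sum_congr rfl fun j _ => by ring
  have hPkInt : ∀ k, Integrable (fun ω => iteratedDeriv k P (ξ ω)) := by
    intro k
    rw [hPkfun k]
    exact integrable_finset_sum _ fun j hj =>
      (hPowInt (j-k) (by have := Finset.mem_range.1 hj; omega)).const_mul _
  have hPkVal : ∀ k, (∫ ω, iteratedDeriv k P (ξ ω))
      = ∑ j ∈ Finset.range (ℓ+1), cP j * ((j.descFactorial k : ℝ) * ∫ ω, ξ ω ^ (j-k)) := by
    intro k
    rw [hPkfun k, integral_finset_sum _ (fun j hj =>
      (hPowInt (j-k) (by have := Finset.mem_range.1 hj; omega)).const_mul _)]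
    exact Finset.sum_congr rfl fun j _ => by rw [integral_const_mul]; ring
  -- the exact identity for the polynomial part
  have E3 : ∑ k ∈ Finset.Icc 1 ℓ, κ (k+1) / (k.factorial : ℝ) * ∫ ω, iteratedDeriv k P (ξ ω)
      = ∫ ω, ξ ω * P (ξ ω) := by
    rw [hPxiVal]
    calc ∑ k ∈ Finset.Icc 1 ℓ, κ (k+1) / (k.factorial : ℝ) * ∫ ω, iteratedDeriv k P (ξ ω)
        = ∑ k ∈ Finset.Icc 1 ℓ, ∑ j ∈ Finset.range (ℓ+1),
            cP j * (κ (k+1) / (k.factorial : ℝ) * ((j.descFactorial k : ℝ) * ∫ ω, ξ ω ^ (j-k))) := by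
          refine Finset.sum_congr rfl fun k _ => ?_
          rw [hPkVal k, Finset.mul_sum]
          exact Finset.sum_congr rfl fun j _ => by ring
      _ = ∑ j ∈ Finset.range (ℓ+1), ∑ k ∈ Finset.Icc 1 ℓ,
            cP j * (κ (k+1) / (k.factorial : ℝ) * ((j.descFactorial k : ℝ) * ∫ ω, ξ ω ^ (j-k))) :=
          Finset.sum_comm
      _ = ∑ j ∈ Finset.range (ℓ+1), cP j * ∫ ω, ξ ω ^ (j+1) := by
          refine Finset.sum_congr rfl fun j hj => ?_
          rw [← Finset.mul_sum, ← hmom j (by have := Finset.mem_range.1 hj; omega)]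
  -- integrability of f-parts
  have hfxiInt : Integrable (fun ω => ξ ω * f (ξ ω)) := by
    obtain ⟨B0, hB0⟩ := hB 0 (by omega)
    simp only [iteratedDeriv_zero] at hB0
    refine ((hint 1 (by omega)).const_mul (|B0| + 1)).mono'
      ((hmeas.mul ((hf'.continuous.measurable).comp hmeas)).aestronglyMeasurable)
      (Filter.Eventually.of_forall fun ω => ?_)
    rw [Real.norm_eq_abs, abs_mul, pow_one]
    have h1 : |f (ξ ω)| ≤ |B0| + 1 := le_trans (hB0 (ξ ω)) (by linarith [le_abs_self B0])
    calc |ξ ω| * |f (ξ ω)| ≤ |ξ ω| * (|B0| + 1) := mul_le_mul_of_nonneg_left h1 (abs_nonneg _)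
      _ = (|B0| + 1) * |ξ ω| := by ring
  have hfkInt : ∀ k, k ≤ ℓ+1 → Integrable (fun ω => iteratedDeriv k f (ξ ω)) := by
    intro k hk
    obtain ⟨Bk, hBk⟩ := hB k hk
    have hle : ((k : ℕ) : WithTop ℕ∞) ≤ ((ℓ+1 : ℕ) : WithTop ℕ∞) := by exact_mod_cast hk
    refine (integrable_const Bk).mono'
      ((((hf'.continuous_iteratedDeriv _ hle).measurable).comp hmeas).aestronglyMeasurable)
      (Filter.Eventually.of_forall fun ω => ?_)
    rw [Real.norm_eq_abs]
    exact hBk (ξ ω)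
  -- decomposition identities
  have E1 : (∫ ω, ξ ω * f (ξ ω)) = (∫ ω, ξ ω * P (ξ ω)) + ∫ ω, ξ ω * g (ξ ω) := by
    rw [← integral_add hPxiInt hgI.1]
    refine integral_congr_ae (Filter.Eventually.of_forall fun ω => ?_)
    show ξ ω * f (ξ ω) = ξ ω * P (ξ ω) + ξ ω * g (ξ ω)
    rw [hgdef]; ring
  have E2 : ∀ k, 1 ≤ k → k ≤ ℓ → (∫ ω, iteratedDeriv k f (ξ ω))
      = (∫ ω, iteratedDeriv k P (ξ ω)) + ∫ ω, iteratedDeriv k g (ξ ω) := by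
    intro k hk1 hk2
    rw [← integral_add (hPkInt k) (hgkI k hk1 hk2).1]
    refine integral_congr_ae (Filter.Eventually.of_forall fun ω => ?_)
    show iteratedDeriv k f (ξ ω) = iteratedDeriv k P (ξ ω) + iteratedDeriv k g (ξ ω)
    rw [hgk k (by omega) (ξ ω)]; ring
  have hEmain : (∫ ω, ξ ω * f (ξ ω))
        - ∑ k ∈ Finset.Icc 1 ℓ, κ (k+1) / (k.factorial : ℝ) * ∫ ω, iteratedDeriv k f (ξ ω)
      = (∫ ω, ξ ω * g (ξ ω))
        - ∑ k ∈ Finset.Icc 1 ℓ, κ (k+1) / (k.factorial : ℝ) * ∫ ω, iteratedDeriv k g (ξ ω) := by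
    have hsum : ∑ k ∈ Finset.Icc 1 ℓ, κ (k+1) / (k.factorial : ℝ) * ∫ ω, iteratedDeriv k f (ξ ω)
        = (∑ k ∈ Finset.Icc 1 ℓ, κ (k+1) / (k.factorial : ℝ) * ∫ ω, iteratedDeriv k P (ξ ω))
          + ∑ k ∈ Finset.Icc 1 ℓ, κ (k+1) / (k.factorial : ℝ) * ∫ ω, iteratedDeriv k g (ξ ω) := by
      rw [← Finset.sum_add_distrib]
      refine Finset.sum_congr rfl fun k hk => ?_
      obtain ⟨hk1, hk2⟩ := Finset.mem_Icc.1 hk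
      rw [E2 k hk1 hk2]; ring
    rw [E1, hsum, E3]; ring
  -- final assembly
  have hSbound : ∀ k ∈ Finset.Icc 1 ℓ,
      |κ (k+1) / (k.factorial : ℝ) * ∫ ω, iteratedDeriv k g (ξ ω)|
        ≤ (5:ℝ)^((ℓ+1)*(ℓ+1)) * (∫ ω, |ξ ω| ^ (ℓ+2)) * Mχ
          + (5:ℝ)^((ℓ+1)*(ℓ+1)) * (∫ ω, A.indicator (fun ω' => |ξ ω'| ^ (ℓ+2)) ω) * Minf := by
    intro k hk
    obtain ⟨hk1, hk2⟩ := Finset.mem_Icc.1 hk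
    have hgkb := (hgkI k hk1 hk2).2
    have hκT := (hκbd (k+1) (by omega) (ℓ+1-k) (by omega)).1
    have hκN := (hκbd (k+1) (by omega) (ℓ+1-k) (by omega)).2
    have hK : (5:ℝ)^((k+1)*(k+1)) ≤ (5:ℝ)^((ℓ+1)*(ℓ+1)) :=
      pow_le_pow_right₀ (by norm_num) (Nat.mul_le_mul (by omega) (by omega))
    have hfk1 : |κ (k+1) / (k.factorial : ℝ)| ≤ |κ (k+1)| := by
      rw [abs_div, abs_of_nonneg (by positivity : (0:ℝ) ≤ (k.factorial : ℝ))]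
      exact div_le_self (abs_nonneg _) (Nat.one_le_cast.mpr k.factorial_pos)
    calc |κ (k+1) / (k.factorial : ℝ) * ∫ ω, iteratedDeriv k g (ξ ω)|
        = |κ (k+1) / (k.factorial : ℝ)| * |∫ ω, iteratedDeriv k g (ξ ω)| := abs_mul _ _
      _ ≤ |κ (k+1)| * (Mχ * (∫ ω, |ξ ω| ^ (ℓ+1-k))
            + Minf * (∫ ω, A.indicator (fun ω' => |ξ ω'| ^ (ℓ+1-k)) ω)) :=
          mul_le_mul hfk1 hgkb (abs_nonneg _) (abs_nonneg _)
      _ = (|κ (k+1)| * (∫ ω, |ξ ω| ^ (ℓ+1-k))) * Mχ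
            + (|κ (k+1)| * (∫ ω, A.indicator (fun ω' => |ξ ω'| ^ (ℓ+1-k)) ω)) * Minf := by ring
      _ ≤ ((5:ℝ)^((k+1)*(k+1)) * (∫ ω, |ξ ω| ^ (ℓ+2))) * Mχ
            + ((5:ℝ)^((k+1)*(k+1)) * (∫ ω, A.indicator (fun ω' => |ξ ω'| ^ (ℓ+2)) ω)) * Minf :=
          add_le_add (mul_le_mul_of_nonneg_right hκN hMχ0)
            (mul_le_mul_of_nonneg_right hκT hMinf0)
      _ ≤ (5:ℝ)^((ℓ+1)*(ℓ+1)) * (∫ ω, |ξ ω| ^ (ℓ+2)) * Mχ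
            + (5:ℝ)^((ℓ+1)*(ℓ+1)) * (∫ ω, A.indicator (fun ω' => |ξ ω'| ^ (ℓ+2)) ω) * Minf :=
          add_le_add
            (mul_le_mul_of_nonneg_right (mul_le_mul_of_nonneg_right hK (hN0 _)) hMχ0)
            (mul_le_mul_of_nonneg_right (mul_le_mul_of_nonneg_right hK (hT0 _)) hMinf0)
  have htri : |(∫ ω, ξ ω * f (ξ ω))
        - ∑ k ∈ Finset.Icc 1 ℓ, κ (k+1) / (k.factorial : ℝ) * ∫ ω, iteratedDeriv k f (ξ ω)|
      ≤ |∫ ω, ξ ω * g (ξ ω)|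
        + ∑ k ∈ Finset.Icc 1 ℓ, |κ (k+1) / (k.factorial : ℝ) * ∫ ω, iteratedDeriv k g (ξ ω)| := by
    rw [hEmain]
    exact le_trans (abs_sub _ _) (add_le_add le_rfl (Finset.abs_sum_le_sum_abs _ _))
  have hsum2 : ∑ k ∈ Finset.Icc 1 ℓ, |κ (k+1) / (k.factorial : ℝ) * ∫ ω, iteratedDeriv k g (ξ ω)|
      ≤ (ℓ : ℝ) * ((5:ℝ)^((ℓ+1)*(ℓ+1)) * (∫ ω, |ξ ω| ^ (ℓ+2)) * Mχ
          + (5:ℝ)^((ℓ+1)*(ℓ+1)) * (∫ ω, A.indicator (fun ω' => |ξ ω'| ^ (ℓ+2)) ω) * Minf) := by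
    refine le_trans (Finset.sum_le_sum hSbound) ?_
    rw [Finset.sum_const, Nat.card_Icc]
    simp only [Nat.add_sub_cancel, nsmul_eq_mul]
    exact le_rfl
  have hY0 := hN0 (ℓ+2)
  have hX0 := hT0 (ℓ+2)
  have hK00 : (0:ℝ) ≤ (5:ℝ)^((ℓ+1)*(ℓ+1)) := by positivity
  have hfinal : |(∫ ω, ξ ω * f (ξ ω))
        - ∑ k ∈ Finset.Icc 1 ℓ, κ (k+1) / (k.factorial : ℝ) * ∫ ω, iteratedDeriv k f (ξ ω)|
      ≤ (1 + (ℓ+1 : ℝ) * 5^((ℓ+1)*(ℓ+1))) * (∫ ω, |ξ ω| ^ (ℓ+2)) * Mχ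
        + (1 + (ℓ+1 : ℝ) * 5^((ℓ+1)*(ℓ+1)))
            * (∫ ω, A.indicator (fun ω' => |ξ ω'| ^ (ℓ+2)) ω) * Minf := by
    refine le_trans htri (le_trans (add_le_add hgI.2 hsum2) ?_)
    have := assemble_bound (∫ ω, |ξ ω| ^ (ℓ+2)) (∫ ω, A.indicator (fun ω' => |ξ ω'| ^ (ℓ+2)) ω)
      Mχ Minf ((5:ℝ)^((ℓ+1)*(ℓ+1))) (ℓ:ℝ) hY0 hX0 hMχ0 hMinf0 hK00 (Nat.cast_nonneg ℓ)
    convert this using 2 <;> push_cast <;> ring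
  exact hfinal
end
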